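/- For all integers t ≥ k ≥ 3 there exists a k-uniform hypergraph H such that the maximum degree of H is at most C(t, k−1) + C(t + 1 − ⌈(t+2)/k⌉, k−2) and |σ(H)|/|H| < k/(t − k + 2), i.e., (t − k + 2)·|σ(H)| < k·|H|. -/

import Mathlib

private lemma aux_deg (s : Finset ℕ) (r v : ℕ) :
    ((s.powersetCard r).filter (fun E => v ∈ E)).card ≤ (s.card - 1).choose (r - 1) := by
  by_cases hv : v ∈ s
  · have h : ((s.powersetCard r).filter (fun E => v ∈ E)).card
        ≤ ((s.erase v).powersetCard (r-1)).card := by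
      apply Finset.card_le_card_of_injOn (fun E => E.erase v)
      · intro E hE
        rw [Finset.mem_coe, Finset.mem_filter, Finset.mem_powersetCard] at hE
        obtain ⟨⟨hEs, hEc⟩, hvE⟩ := hE
        rw [Finset.mem_coe, Finset.mem_powersetCard]
        exact ⟨Finset.erase_subset_erase _ hEs,
          by rw [Finset.card_erase_of_mem hvE, hEc]⟩
      · intro E1 h1 E2 h2 heq
        rw [Finset.mem_coe, Finset.mem_filter] at h1 h2
        have heq' : E1.erase v = E2.erase v := heq
        rw [← Finset.insert_erase h1.2, heq', Finset.insert_erase h2.2]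
    rwa [Finset.card_powersetCard, Finset.card_erase_of_mem hv] at h
  · have h : (s.powersetCard r).filter (fun E => v ∈ E) = ∅ := by
      apply Finset.filter_eq_empty_iff.mpr
      intro E hE hvE
      rw [Finset.mem_powersetCard] at hE
      exact hv (hE.1 hvE)
    simp [h]

/-- For all integers `t ≥ k ≥ 3` there exists a `k`-uniform hypergraph `H` with maximum
degree at most `C(t,k−1) + C(t+1−⌈(t+2)/k⌉, k−2)` and `(t − k + 2)·|σ(H)| < k·|H|`. -/
theorem stmt_5 (t k : ℕ) (hk : 3 ≤ k) (htk : k ≤ t) :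
    ∃ H : Finset (Finset ℕ),
      (∀ E ∈ H, E.card = k) ∧
      (∀ v : ℕ, (H.filter (fun E => v ∈ E)).card ≤
        Nat.choose t (k - 1) +
          Nat.choose (t + 1 - ⌈((t : ℚ) + 2) / (k : ℚ)⌉₊) (k - 2)) ∧
      (t - k + 2) * (Finset.shadow H).card < k * H.card := by
  have hkQ : (0:ℚ) < (k:ℚ) := by positivity
  set m : ℕ := ⌈((t : ℚ) + 2) / (k : ℚ)⌉₊ with hmdef
  -- ceiling bounds
  have hcm1 : t + 2 ≤ m * k := by
    have h1 : ((t:ℚ) + 2) / (k:ℚ) ≤ (m:ℚ) := Nat.le_ceil _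
    have h2 : ((t:ℚ) + 2) ≤ (m:ℚ) * k := (div_le_iff₀ hkQ).mp h1
    exact_mod_cast h2
  have hcm2 : m * k ≤ t + k + 1 := by
    have h1 : (m:ℚ) < ((t:ℚ) + 2) / (k:ℚ) + 1 := Nat.ceil_lt_add_one (by positivity)
    have h2 : (m:ℚ) * k < (((t:ℚ) + 2) / (k:ℚ) + 1) * k :=
      mul_lt_mul_of_pos_right h1 hkQ
    rw [add_mul, one_mul, div_mul_cancel₀ _ (ne_of_gt hkQ)] at h2
    have h3 : m * k < t + 2 + k := by exact_mod_cast h2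
    omega
  have hm2 : 2 ≤ m := by
    by_contra h
    push_neg at h
    have : m * k ≤ 1 * k := Nat.mul_le_mul_right k (by omega)
    omega
  have hmt : m ≤ t := by
    have : 3 * m ≤ k * m := Nat.mul_le_mul_right m hk
    have : k * m = m * k := Nat.mul_comm _ _
    omega
  -- x := t + 2 - m
  set x : ℕ := t + 2 - m with hxdef
  have hxm : x + m = t + 2 := by omega
  have hxk : k - 1 ≤ x := by
    by_contra h
    push_neg at h
    -- then m ≥ t + 4 - k
    have hge : t + 4 - k ≤ m := by omega
    have h1 : k * (t + 4 - k) ≤ k * m := Nat.mul_le_mul_left k hge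
    have h2 : k * m = m * k := Nat.mul_comm _ _
    have h3 : k * (t + 4 - k) ≤ t + k + 1 := by omega
    have h4 : t + 4 - k = (t - k) + 4 := by omega
    rw [h4, Nat.mul_add] at h3
    have h5 : 3 * (t - k) ≤ k * (t - k) := Nat.mul_le_mul_right _ hk
    omega
  have hxt : x ≤ t := by omega
  have hx1 : x - 1 = t + 1 - m := by omega
  -- the construction
  set a : ℕ := t + 1 with hadef
  set A : Finset (Finset ℕ) := (Finset.range (t+1)).powersetCard k with hAdef
  set S0 : Finset (Finset ℕ) := (Finset.range x).powersetCard (k-1) with hS0def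
  set B : Finset (Finset ℕ) := S0.image (insert a) with hBdef
  have hanotin : ∀ T ∈ S0, a ∉ T := by
    intro T hT haT
    rw [hS0def, Finset.mem_powersetCard] at hT
    have := hT.1 haT
    rw [Finset.mem_range] at this
    omega
  refine ⟨A ∪ B, ?_, ?_, ?_⟩
  · -- uniformity
    intro E hE
    rw [Finset.mem_union] at hE
    rcases hE with hE | hE
    · rw [hAdef, Finset.mem_powersetCard] at hE
      exact hE.2
    · rw [hBdef, Finset.mem_image] at hE
      obtain ⟨T, hT, rfl⟩ := hE
      have hcard : T.card = k - 1 := by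
        rw [hS0def, Finset.mem_powersetCard] at hT
        exact hT.2
      rw [Finset.card_insert_of_notMem (hanotin T hT), hcard]
      omega
  · -- degree bound
    intro v
    have hsplit : ((A ∪ B).filter (fun E => v ∈ E)).card
        ≤ (A.filter (fun E => v ∈ E)).card + (B.filter (fun E => v ∈ E)).card := by
      rw [Finset.filter_union]
      exact Finset.card_union_le _ _
    have hA_bound : (A.filter (fun E => v ∈ E)).card ≤ t.choose (k-1) := by
      have := aux_deg (Finset.range (t+1)) k v
      rwa [Finset.card_range, Nat.add_sub_cancel] at this
    by_cases hva : v = a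
    · -- apex vertex
      have hA0 : A.filter (fun E => v ∈ E) = ∅ := by
        apply Finset.filter_eq_empty_iff.mpr
        intro E hE hvE
        rw [hAdef, Finset.mem_powersetCard] at hE
        have := hE.1 hvE
        rw [Finset.mem_range, hva, hadef] at this
        omega
      have hA0' : (A.filter (fun E => v ∈ E)).card = 0 := by rw [hA0]; rfl
      have hB_le : (B.filter (fun E => v ∈ E)).card ≤ x.choose (k-1) := by
        calc (B.filter (fun E => v ∈ E)).card ≤ B.card := Finset.card_filter_le _ _
          _ ≤ S0.card := by rw [hBdef]; exact Finset.card_image_le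
          _ = x.choose (k-1) := by
              rw [hS0def, Finset.card_powersetCard, Finset.card_range]
      have : x.choose (k-1) ≤ t.choose (k-1) := Nat.choose_le_choose _ hxt
      omega
    · -- ordinary vertex
      have hB_bound : (B.filter (fun E => v ∈ E)).card ≤ (a - m).choose (k-2) := by
      -- B.filter ⊆ image of S0.filter
        have hsub : B.filter (fun E => v ∈ E)
            ⊆ (S0.filter (fun T => v ∈ T)).image (insert a) := by
          intro E hE
          rw [Finset.mem_filter, hBdef, Finset.mem_image] at hE
          obtain ⟨⟨T, hT, rfl⟩, hv⟩ := hE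
          rw [Finset.mem_image]
          refine ⟨T, ?_, rfl⟩
          rw [Finset.mem_filter]
          rcases Finset.mem_insert.mp hv with h | h
          · exact absurd h hva
          · exact ⟨hT, h⟩
        calc (B.filter (fun E => v ∈ E)).card
            ≤ ((S0.filter (fun T => v ∈ T)).image (insert a)).card :=
              Finset.card_le_card hsub
          _ ≤ (S0.filter (fun T => v ∈ T)).card := Finset.card_image_le
          _ ≤ (x - 1).choose (k - 1 - 1) := by
              have := aux_deg (Finset.range x) (k-1) v
              rwa [Finset.card_range] at this
          _ = (a - m).choose (k-2) := by
              have h12 : k - 1 - 1 = k - 2 := by omega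
              rw [hx1, h12]
      omega
  · -- ratio
    have hdisj : Disjoint A B := by
      rw [Finset.disjoint_left]
      intro E hEA hEB
      rw [hAdef, Finset.mem_powersetCard] at hEA
      rw [hBdef, Finset.mem_image] at hEB
      obtain ⟨T, hT, rfl⟩ := hEB
      have : a ∈ Finset.range (t+1) := hEA.1 (Finset.mem_insert_self a T)
      rw [Finset.mem_range, hadef] at this
      omega
    have hinj : Set.InjOn (insert a) (S0 : Set (Finset ℕ)) := by
      intro T1 h1 T2 h2 heq
      rw [Finset.mem_coe] at h1 h2
      rw [← Finset.erase_insert (hanotin T1 h1), heq, Finset.erase_insert (hanotin T2 h2)]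
    have hcardH : (A ∪ B).card = (t+1).choose k + x.choose (k-1) := by
      rw [Finset.card_union_of_disjoint hdisj, hAdef, Finset.card_powersetCard,
        Finset.card_range, hBdef, Finset.card_image_of_injOn hinj, hS0def,
        Finset.card_powersetCard, Finset.card_range]
    -- shadow bound
    have hshsub : Finset.shadow (A ∪ B) ⊆
        (Finset.range (t+1)).powersetCard (k-1)
          ∪ ((Finset.range x).powersetCard (k-2)).image (insert a) := by
      intro T hT
      rw [Finset.mem_shadow_iff] at hT
      obtain ⟨S, hS, w, hw, rfl⟩ := hT
      rw [Finset.mem_union] at hS ⊢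
      rcases hS with hS | hS
      · left
        rw [hAdef, Finset.mem_powersetCard] at hS
        rw [Finset.mem_powersetCard]
        refine ⟨(Finset.erase_subset _ _).trans hS.1, ?_⟩
        rw [Finset.card_erase_of_mem hw, hS.2]
      · rw [hBdef, Finset.mem_image] at hS
        obtain ⟨T0, hT0, rfl⟩ := hS
        have haT0 : a ∉ T0 := hanotin T0 hT0
        rw [hS0def, Finset.mem_powersetCard] at hT0
        by_cases hwa : w = a
        · left
          subst hwa
          rw [Finset.erase_insert haT0, Finset.mem_powersetCard]
          refine ⟨hT0.1.trans ?_, hT0.2⟩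
          exact Finset.range_subset_range.mpr (by omega)
        · right
          have hwT0 : w ∈ T0 := by
            rcases Finset.mem_insert.mp hw with h | h
            · exact absurd h hwa
            · exact h
          have herase : (insert a T0).erase w = insert a (T0.erase w) := by
            rw [Finset.erase_insert_of_ne (fun h => hwa h.symm)]
          rw [herase, Finset.mem_image]
          refine ⟨T0.erase w, ?_, rfl⟩
          rw [Finset.mem_powersetCard]
          refine ⟨(Finset.erase_subset _ _).trans hT0.1, ?_⟩
          rw [Finset.card_erase_of_mem hwT0, hT0.2]
          omega
    have hshcard : (Finset.shadow (A ∪ B)).card ≤ (t+1).choose (k-1) + x.choose (k-2) := by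
      calc (Finset.shadow (A ∪ B)).card
          ≤ ((Finset.range (t+1)).powersetCard (k-1)
              ∪ ((Finset.range x).powersetCard (k-2)).image (insert a)).card :=
            Finset.card_le_card hshsub
        _ ≤ ((Finset.range (t+1)).powersetCard (k-1)).card
              + (((Finset.range x).powersetCard (k-2)).image (insert a)).card :=
            Finset.card_union_le _ _
        _ ≤ (t+1).choose (k-1) + x.choose (k-2) := by
            rw [Finset.card_powersetCard, Finset.card_range]
            exact Nat.add_le_add_left (le_trans Finset.card_image_le
              (by rw [Finset.card_powersetCard, Finset.card_range])) _
    -- binomial identities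
    have idA : (t+1).choose (k-1) * (t-k+2) = (t+1).choose k * k := by
      have h := Nat.choose_succ_right_eq (t+1) (k-1)
      have hk1 : k - 1 + 1 = k := by omega
      rw [hk1] at h
      have h2 : t - k + 2 = t + 1 - (k-1) := by omega
      rw [h2, ← h]
    have idB : x.choose (k-1) * (k-1) = x.choose (k-2) * (x - (k-2)) := by
      have h := Nat.choose_succ_right_eq x (k-2)
      have hk2 : k - 2 + 1 = k - 1 := by omega
      rw [hk2] at h
      exact h
    have hpos : 0 < x.choose (k-2) := Nat.choose_pos (by omega)
    -- key numeric inequality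
    have hnum : (k-1) * (t-k+2) < k * (x - (k-2)) := by
      zify [htk, (by omega : k - 2 ≤ x), (by omega : 1 ≤ k), (by omega : 2 ≤ k)]
      have hxmZ : (x:ℤ) + m = t + 2 := by exact_mod_cast hxm
      have hcm2Z : (m:ℤ) * k ≤ t + k + 1 := by exact_mod_cast hcm2
      have hq : (k:ℤ) * x + k * m = k * t + 2 * k := by linear_combination (k:ℤ) * hxmZ
      nlinarith [hq, hcm2Z]
    have key : (t-k+2) * x.choose (k-2) < k * x.choose (k-1) := by
      have h5 : (k-1) * ((t-k+2) * x.choose (k-2)) < (k-1) * (k * x.choose (k-1)) := by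
        calc (k-1) * ((t-k+2) * x.choose (k-2))
            = ((k-1) * (t-k+2)) * x.choose (k-2) := by ring
          _ < (k * (x - (k-2))) * x.choose (k-2) :=
              mul_lt_mul_of_pos_right hnum hpos
          _ = k * (x.choose (k-2) * (x - (k-2))) := by ring
          _ = k * (x.choose (k-1) * (k-1)) := by rw [idB]
          _ = (k-1) * (k * x.choose (k-1)) := by ring
      exact lt_of_mul_lt_mul_left h5 (Nat.zero_le _)
    calc (t - k + 2) * (Finset.shadow (A ∪ B)).card
        ≤ (t - k + 2) * ((t+1).choose (k-1) + x.choose (k-2)) :=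
          Nat.mul_le_mul_left _ hshcard
      _ = (t+1).choose (k-1) * (t-k+2) + (t-k+2) * x.choose (k-2) := by ring
      _ = (t+1).choose k * k + (t-k+2) * x.choose (k-2) := by rw [idA]
      _ < (t+1).choose k * k + k * x.choose (k-1) := Nat.add_lt_add_left key _
      _ = k * ((A ∪ B).card) := by rw [hcardH]; ring
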